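/- arXiv:1107.5611 — 2 statements merged into one kernel-verified Lean document; each statement's English description precedes it below -/
import Mathlib

section
/- Let a ≥ 0, N ≥ 3 and 1 < p < (N+2+2a)/(N−2). Let u be a positive C² solution of −Δu = |x|^a u^p on ℝ^N that is stable outside a compact set and satisfies ∇u ∈ L²(ℝ^N) and |x|^a u^{p+1} ∈ L¹(ℝ^N). Then the energy identity ∫_{ℝ^N} |∇u|² = ∫_{ℝ^N} |x|^a u^{p+1} holds. -/
open MeasureTheory Real Metric

/-- The Laplacian of a function on Euclidean space, as the sum of its second
partial derivatives in the coordinate directions. -/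
noncomputable def lap {N : ℕ} (f : EuclideanSpace ℝ (Fin N) → ℝ)
    (x : EuclideanSpace ℝ (Fin N)) : ℝ :=
  ∑ i : Fin N,
    fderiv ℝ (fun y => fderiv ℝ f y (EuclideanSpace.single i 1)) x (EuclideanSpace.single i 1)


open Filter Function in
lemma young_bound {a p : ℝ} (θ : ℝ) (ha : 0 ≤ a) (hp : 1 < p) {R s v : ℝ}
    (hR : 1 ≤ R) (hs : R ≤ s) (hv : 0 < v) :
    v ^ (2:ℕ) ≤ R ^ θ * (s ^ a * v ^ (p+1)) + R ^ (-(2*θ+2*a)/(p-1)) := by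
  have hR0 : (0:ℝ) < R := lt_of_lt_of_le one_pos hR
  have hs0 : (0:ℝ) < s := lt_of_lt_of_le hR0 hs
  have hc0 : (0:ℝ) < R ^ θ * s ^ a := mul_pos (rpow_pos_of_pos hR0 θ) (rpow_pos_of_pos hs0 a)
  set c : ℝ := R ^ θ * s ^ a with hc
  have hconj : ((p+1)/2).HolderConjugate ((p+1)/(p-1)) := by
    rw [Real.holderConjugate_iff]; constructor
    · linarith
    · rw [inv_div, inv_div]
      field_simp
      ring
  have hA : (0:ℝ) ≤ c ^ ((2:ℝ)/(p+1)) * v ^ (2:ℕ) := by positivity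
  have hB : (0:ℝ) ≤ c ^ (-((2:ℝ)/(p+1))) := by positivity
  have young := Real.young_inequality_of_nonneg hA hB hconj
  have hprod : c ^ ((2:ℝ)/(p+1)) * v ^ (2:ℕ) * c ^ (-((2:ℝ)/(p+1))) = v ^ (2:ℕ) := by
    rw [mul_comm (c ^ ((2:ℝ)/(p+1))) (v ^ (2:ℕ)), mul_assoc, ← Real.rpow_add hc0]
    simp
  rw [hprod] at young
  have hAr : (c ^ ((2:ℝ)/(p+1)) * v ^ (2:ℕ)) ^ ((p+1)/2) = c * v ^ (p+1) := by
    rw [Real.mul_rpow (by positivity) (by positivity), ← Real.rpow_natCast v 2,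
      ← Real.rpow_mul hc0.le, ← Real.rpow_mul hv.le]
    norm_num
    have e1 : (p+1)/(p+1) = (1:ℝ) := div_self (by linarith)
    have e2 : 2 * ((p+1)/2) = p+1 := by ring
    rw [e1, e2, Real.rpow_one]
  have hBq : (c ^ (-((2:ℝ)/(p+1)))) ^ ((p+1)/(p-1)) ≤ R ^ (-(2*θ+2*a)/(p-1)) := by
    rw [← Real.rpow_mul hc0.le]
    have hexp : -((2:ℝ)/(p+1)) * ((p+1)/(p-1)) = -2/(p-1) := by
      have h1 : (p:ℝ)+1 ≠ 0 := by linarith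
      have h2 : (p:ℝ)-1 ≠ 0 := by linarith
      field_simp
    rw [hexp, hc, Real.mul_rpow (by positivity) (by positivity),
      ← Real.rpow_mul hR0.le, ← Real.rpow_mul hs0.le]
    have h1 : s ^ (a * (-2/(p-1))) ≤ R ^ (a * (-2/(p-1))) := by
      apply Real.rpow_le_rpow_of_nonpos hR0 hs
      apply mul_nonpos_of_nonneg_of_nonpos ha
      apply div_nonpos_of_nonpos_of_nonneg <;> linarith
    calc R ^ (θ * (-2/(p-1))) * s ^ (a * (-2/(p-1)))
        ≤ R ^ (θ * (-2/(p-1))) * R ^ (a * (-2/(p-1))) := by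
          apply mul_le_mul_of_nonneg_left h1 (by positivity)
      _ = R ^ (-(2*θ+2*a)/(p-1)) := by
          rw [← Real.rpow_add hR0]
          congr 1
          field_simp
          ring
  have hr1 : (1:ℝ) ≤ (p+1)/2 := by linarith [hconj.lt]
  have hq1 : (1:ℝ) ≤ (p+1)/(p-1) := by
    rw [le_div_iff₀ (by linarith)]
    linarith
  calc v ^ (2:ℕ)
      ≤ (c ^ ((2:ℝ)/(p+1)) * v ^ (2:ℕ)) ^ ((p+1)/2) / ((p+1)/2)
        + (c ^ (-((2:ℝ)/(p+1)))) ^ ((p+1)/(p-1)) / ((p+1)/(p-1)) := young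
    _ ≤ (c ^ ((2:ℝ)/(p+1)) * v ^ (2:ℕ)) ^ ((p+1)/2)
        + (c ^ (-((2:ℝ)/(p+1)))) ^ ((p+1)/(p-1)) := by
        gcongr
        · exact div_le_self (by positivity) hr1
        · exact div_le_self (by positivity) hq1
    _ ≤ c * v ^ (p+1) + R ^ (-(2*θ+2*a)/(p-1)) := by
        rw [hAr]
        exact add_le_add_right hBq _
    _ = R ^ θ * (s ^ a * v ^ (p+1)) + R ^ (-(2*θ+2*a)/(p-1)) := by
        rw [hc]; ring

namespace HenonAux
open Filter Function
variable {N : ℕ}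

local notation "E" => EuclideanSpace ℝ (Fin N)
local notation "e" i => EuclideanSpace.single i (1:ℝ)

lemma inner_gradient (f : E → ℝ) (x v : E) : (inner ℝ (gradient f x) v : ℝ) = fderiv ℝ f x v := by
  unfold gradient
  exact InnerProductSpace.toDual_symm_apply

lemma grad_apply (f : E → ℝ) (x : E) (i : Fin N) :
    gradient f x i = fderiv ℝ f x (e i) := by
  rw [← inner_gradient f x (e i), EuclideanSpace.inner_single_right]
  simp

lemma sum_fderiv_mul (f g : E → ℝ) (x : E) :
    ∑ i : Fin N, fderiv ℝ f x (e i) * fderiv ℝ g x (e i)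
      = (inner ℝ (gradient f x) (gradient g x) : ℝ) := by
  rw [PiLp.inner_apply]
  simp only [RCLike.inner_apply, conj_trivial, ← grad_apply]
  exact Finset.sum_congr rfl fun _ _ => mul_comm _ _

lemma norm_grad_sq (f : E → ℝ) (x : E) :
    ‖gradient f x‖ ^ 2 = ∑ i : Fin N, fderiv ℝ f x (e i) ^ 2 := by
  rw [← real_inner_self_eq_norm_sq, ← sum_fderiv_mul]
  simp [sq]

lemma norm_gradient_eq (f : E → ℝ) (x : E) : ‖gradient f x‖ = ‖fderiv ℝ f x‖ := by
  unfold gradient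
  exact LinearIsometryEquiv.norm_map _ _

lemma continuous_gradient {f : E → ℝ} (hf : Continuous (fderiv ℝ f)) :
    Continuous (fun x => gradient f x) := by
  unfold gradient
  exact (InnerProductSpace.toDual ℝ _).symm.continuous.comp hf

lemma stepA (a p : ℝ) (u : E → ℝ) (hu : ContDiff ℝ 2 u) (hupos : ∀ x, 0 < u x)
    (hequ : ∀ x, -lap u x = ‖x‖ ^ a * u x ^ p)
    (ζ : E → ℝ) (hζ : ContDiff ℝ 1 ζ) (hζc : HasCompactSupport ζ) :
    (∫ x, ζ x ^ 2 * ‖gradient u x‖ ^ 2)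
      + ∫ x, u x * (inner ℝ (gradient (fun y => ζ y ^ 2) x) (gradient u x) : ℝ)
      = ∫ x, ζ x ^ 2 * (‖x‖ ^ a * u x ^ (p + 1)) := by
  have hu1 : ContDiff ℝ 1 u := hu.of_le one_le_two
  have hfd : ContDiff ℝ 1 (fderiv ℝ u) := hu.fderiv_right (by norm_num)
  have hζ2 : ContDiff ℝ 1 (fun y => ζ y ^ 2) := hζ.pow 2
  have hζ2c : HasCompactSupport (fun y => ζ y ^ 2) := by
    have := hζc.mul_right (f' := ζ)
    simpa [pow_two, Pi.mul_def] using this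
  set w : E → ℝ := fun y => ζ y ^ 2 * u y with hw
  have hwc : HasCompactSupport w := hζ2c.mul_right
  have hw1 : ContDiff ℝ 1 w := hζ2.mul hu1
  have intCC : ∀ (f : E → ℝ), Continuous f → HasCompactSupport f → Integrable f volume :=
    fun f hf hc => hf.integrable_of_hasCompactSupport hc
  have hgradu_cont : Continuous (fderiv ℝ u) := hfd.continuous
  have hgi_cont : ∀ i : Fin N, Continuous fun x => fderiv ℝ u x (e i) :=
    fun i => hgradu_cont.clm_apply continuous_const
  have hgi1 : ∀ i : Fin N, ContDiff ℝ 1 fun x => fderiv ℝ u x (e i) :=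
    fun i => hfd.clm_apply contDiff_const
  have hw'_cont : Continuous (fderiv ℝ w) := hw1.continuous_fderiv one_ne_zero
  have hsupp_w' : ∀ i : Fin N, HasCompactSupport fun x => fderiv ℝ w x (e i) := by
    intro i
    apply hwc.mono'
    intro x hx
    apply support_fderiv_subset ℝ
    show fderiv ℝ w x ≠ 0
    intro h
    exact hx (by simp [h])
  have hf'g : ∀ i : Fin N,
      Integrable (fun x => fderiv ℝ w x (e i) * fderiv ℝ u x (e i)) volume :=
    fun i => intCC _ ((hw'_cont.clm_apply continuous_const).mul (hgi_cont i))
      ((hsupp_w' i).mul_right)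
  have hfg' : ∀ i : Fin N,
      Integrable (fun x => w x * fderiv ℝ (fun y => fderiv ℝ u y (e i)) x (e i)) volume :=
    fun i => intCC _ ((hζ2.continuous.mul hu1.continuous).mul
      (((hgi1 i).continuous_fderiv one_ne_zero).clm_apply continuous_const))
      (hwc.mul_right)
  have hfg : ∀ i : Fin N, Integrable (fun x => w x * fderiv ℝ u x (e i)) volume :=
    fun i => intCC _ ((hζ2.continuous.mul hu1.continuous).mul (hgi_cont i)) (hwc.mul_right)
  have key : ∀ i : Fin N,
      (∫ x, w x * fderiv ℝ (fun y => fderiv ℝ u y (e i)) x (e i))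
        = - ∫ x, fderiv ℝ w x (e i) * fderiv ℝ u x (e i) :=
    fun i => integral_mul_fderiv_eq_neg_fderiv_mul_of_integrable (hf'g i) (hfg' i) (hfg i)
      (fun x _ => hw1.differentiable one_ne_zero x) (fun x _ => (hgi1 i).differentiable one_ne_zero x)
  -- sum the identities over i
  have hsum : (∫ x, w x * lap u x)
      = - ∫ x, ∑ i : Fin N, fderiv ℝ w x (e i) * fderiv ℝ u x (e i) := by
    have l1 : (∫ x, w x * lap u x)
        = ∑ i : Fin N, ∫ x, w x * fderiv ℝ (fun y => fderiv ℝ u y (e i)) x (e i) := by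
      rw [← integral_finset_sum _ (fun i _ => hfg' i)]
      congr 1
      ext x
      rw [lap, Finset.mul_sum]
    rw [l1, Finset.sum_congr rfl (fun i _ => key i), Finset.sum_neg_distrib,
      integral_finset_sum _ (fun i _ => hf'g i)]
  -- pointwise identification of the right-hand side
  have hpt : ∀ x, ∑ i : Fin N, fderiv ℝ w x (e i) * fderiv ℝ u x (e i)
      = ζ x ^ 2 * ‖gradient u x‖ ^ 2
        + u x * (inner ℝ (gradient (fun y => ζ y ^ 2) x) (gradient u x) : ℝ) := by
    intro x
    have hdw : fderiv ℝ w x = ζ x ^ 2 • fderiv ℝ u x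
        + u x • fderiv ℝ (fun y => ζ y ^ 2) x := by
      exact fderiv_mul (hζ2.differentiable one_ne_zero x) (hu1.differentiable one_ne_zero x)
    rw [hdw]
    simp only [ContinuousLinearMap.add_apply, ContinuousLinearMap.coe_smul', Pi.smul_apply,
      smul_eq_mul, add_mul]
    rw [Finset.sum_add_distrib]
    congr 1
    · rw [norm_grad_sq, Finset.mul_sum]
      congr 1; ext i; ring
    · rw [← sum_fderiv_mul, Finset.mul_sum]
      congr 1; ext i; ring
  -- pointwise identification of the left-hand side
  have hlt : ∀ x, w x * lap u x = -(ζ x ^ 2 * (‖x‖ ^ a * u x ^ (p + 1))) := by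
    intro x
    have h1 : lap u x = -(‖x‖ ^ a * u x ^ p) := by
      have := hequ x; linarith
    rw [h1, hw]
    have h2 : u x ^ (p + 1) = u x ^ p * u x := Real.rpow_add_one (hupos x).ne' p
    rw [h2]; ring
  have hInt1 : Integrable (fun x => ζ x ^ 2 * ‖gradient u x‖ ^ 2) volume := by
    apply intCC
    · exact (hζ.continuous.pow 2).mul
        (((continuous_gradient hgradu_cont).norm).pow 2)
    · exact hζ2c.mul_right
  have hgradζ2_cont : Continuous (fun x => gradient (fun y => ζ y ^ 2) x) :=
    continuous_gradient (hζ2.continuous_fderiv one_ne_zero)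
  have hgradζ2_supp : HasCompactSupport (fun x => gradient (fun y => ζ y ^ 2) x) := by
    apply hζ2c.mono'
    intro x hx
    apply support_fderiv_subset ℝ
    show fderiv ℝ (fun y => ζ y ^ 2) x ≠ 0
    intro h
    apply hx
    show gradient (fun y => ζ y ^ 2) x = 0
    unfold gradient
    rw [h, map_zero]
  have hInt2 : Integrable
      (fun x => u x * (inner ℝ (gradient (fun y => ζ y ^ 2) x) (gradient u x) : ℝ)) volume := by
    apply intCC
    · exact hu1.continuous.mul (hgradζ2_cont.inner (continuous_gradient hgradu_cont))
    · apply HasCompactSupport.mul_left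
      apply hgradζ2_supp.mono'
      intro x hx
      apply subset_closure
      show gradient (fun y => ζ y ^ 2) x ≠ 0
      intro h
      apply hx
      show (inner ℝ (gradient (fun y => ζ y ^ 2) x) (gradient u x) : ℝ) = 0
      rw [h, inner_zero_left]
  have lhs_eq : (∫ x, w x * lap u x) = - ∫ x, ζ x ^ 2 * (‖x‖ ^ a * u x ^ (p + 1)) := by
    rw [← integral_neg]
    congr 1
    ext x
    rw [hlt x]
  rw [lhs_eq] at hsum
  have rhs_eq : (∫ x, ∑ i : Fin N, fderiv ℝ w x (e i) * fderiv ℝ u x (e i))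
      = (∫ x, ζ x ^ 2 * ‖gradient u x‖ ^ 2)
        + ∫ x, u x * (inner ℝ (gradient (fun y => ζ y ^ 2) x) (gradient u x) : ℝ) := by
    rw [← integral_add hInt1 hInt2]
    congr 1
    ext x
    exact hpt x
  rw [rhs_eq] at hsum
  linarith


noncomputable def χN (N : ℕ) : ContDiffBump (0 : EuclideanSpace ℝ (Fin N)) :=
  ⟨1, 2, one_pos, one_lt_two⟩

noncomputable def ζR (N : ℕ) (R : ℝ) : EuclideanSpace ℝ (Fin N) → ℝ :=
  fun x => χN N (R⁻¹ • x)

noncomputable def ηN (N : ℕ) : EuclideanSpace ℝ (Fin N) → ℝ := fun y => χN N y ^ 2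

lemma ζR_contDiff (R : ℝ) : ContDiff ℝ 1 (ζR N R) :=
  ((χN N).contDiff).comp (contDiff_id.const_smul R⁻¹)

lemma ζR_nonneg (R : ℝ) (x : E) : 0 ≤ ζR N R x := (χN N).nonneg

lemma ζR_le_one (R : ℝ) (x : E) : ζR N R x ≤ 1 := (χN N).le_one

lemma ζR_hcs {R : ℝ} (hR : 0 < R) : HasCompactSupport (ζR N R) := by
  apply HasCompactSupport.intro (isCompact_closedBall (0 : E) (2 * R))
  intro x hx
  apply (χN N).zero_of_le_dist
  have hx' : 2 * R < ‖x‖ := by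
    simpa [dist_eq_norm] using hx
  have : dist (R⁻¹ • x) 0 = R⁻¹ * ‖x‖ := by
    rw [dist_eq_norm, sub_zero, norm_smul, norm_inv, Real.norm_eq_abs, abs_of_pos hR]
  rw [this]
  show (χN N).rOut ≤ _
  show (2 : ℝ) ≤ _
  rw [le_inv_mul_iff₀ hR]
  linarith

lemma ζR_one {R : ℝ} (hR : 0 < R) {x : E} (hx : ‖x‖ ≤ R) : ζR N R x = 1 := by
  apply (χN N).one_of_mem_closedBall
  have : dist (R⁻¹ • x) 0 = R⁻¹ * ‖x‖ := by
    rw [dist_eq_norm, sub_zero, norm_smul, norm_inv, Real.norm_eq_abs, abs_of_pos hR]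
  rw [mem_closedBall, this]
  show _ ≤ (χN N).rIn
  show _ ≤ (1 : ℝ)
  rw [inv_mul_le_iff₀ hR]
  linarith

lemma ηN_contDiff : ContDiff ℝ 1 (ηN N) := ((χN N).contDiff).pow 2

lemma ζR_sq_fderiv {R : ℝ} (hR : 0 < R) (x : E) :
    fderiv ℝ (fun y => ζR N R y ^ 2) x = R⁻¹ • fderiv ℝ (ηN N) (R⁻¹ • x) := by
  have hcomp : (fun y : E => ζR N R y ^ 2) = (ηN N) ∘ (fun y : E => R⁻¹ • y) := rfl
  have hsm : HasFDerivAt (fun y : E => R⁻¹ • y)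
      (R⁻¹ • ContinuousLinearMap.id ℝ E) x := (hasFDerivAt_id x).const_smul R⁻¹
  have hη : HasFDerivAt (ηN N) (fderiv ℝ (ηN N) (R⁻¹ • x)) (R⁻¹ • x) :=
    (ηN_contDiff.differentiable one_ne_zero (R⁻¹ • x)).hasFDerivAt
  have := (hη.comp x hsm).fderiv
  rw [hcomp, this]
  ext v
  simp

lemma ζR_grad_sq_bound {R : ℝ} (hR : 0 < R) {C : ℝ}
    (hC : ∀ y : E, ‖fderiv ℝ (ηN N) y‖ ≤ C) (x : E) :
    ‖gradient (fun y => ζR N R y ^ 2) x‖ ≤ R⁻¹ * C := by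
  rw [norm_gradient_eq, ζR_sq_fderiv hR, norm_smul]
  rw [norm_inv, Real.norm_eq_abs, abs_of_pos hR]
  exact mul_le_mul_of_nonneg_left (hC _) (by positivity)

lemma ζR_grad_sq_zero_of_lt {R : ℝ} (hR : 0 < R) {x : E} (hx : ‖x‖ < R) :
    gradient (fun y => ζR N R y ^ 2) x = 0 := by
  have hev : (fun y => ζR N R y ^ 2) =ᶠ[nhds x] (fun _ => (1 : ℝ)) := by
    filter_upwards [Metric.ball_mem_nhds x (sub_pos.2 hx)] with y hy
    have : ‖y‖ ≤ R := by
      have := mem_ball_iff_norm.1 hy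
      have h2 := norm_le_norm_add_norm_sub' y x
      calc ‖y‖ ≤ ‖x‖ + ‖y - x‖ := by
            simpa [norm_sub_rev] using norm_le_insert' y x
        _ ≤ R := by
            have := mem_ball_iff_norm.1 hy
            linarith [this]
    rw [ζR_one hR this, one_pow]
  unfold gradient
  rw [hev.fderiv_eq, fderiv_const_apply]
  simp

lemma ζR_grad_sq_zero_of_gt {R : ℝ} (hR : 0 < R) {x : E} (hx : 2 * R < ‖x‖) :
    gradient (fun y => ζR N R y ^ 2) x = 0 := by
  have hopen : IsOpen {y : E | 2 * R < ‖y‖} := isOpen_lt continuous_const continuous_norm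
  have hev : (fun y => ζR N R y ^ 2) =ᶠ[nhds x] (fun _ => (0 : ℝ)) := by
    filter_upwards [hopen.mem_nhds hx] with y hy
    have hz : ζR N R y = 0 := by
      apply (χN N).zero_of_le_dist
      have : dist (R⁻¹ • y) 0 = R⁻¹ * ‖y‖ := by
        rw [dist_eq_norm, sub_zero, norm_smul, norm_inv, Real.norm_eq_abs, abs_of_pos hR]
      rw [this]
      show (2:ℝ) ≤ _
      rw [le_inv_mul_iff₀ hR]
      linarith
    rw [hz]
    norm_num
  unfold gradient
  rw [hev.fderiv_eq, fderiv_const_apply]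
  simp

lemma ηN_fderiv_bound : ∃ C : ℝ, 0 ≤ C ∧ ∀ y : E, ‖fderiv ℝ (ηN N) y‖ ≤ C := by
  have hcs : HasCompactSupport (ηN N) := by
    apply ((χN N).hasCompactSupport).mono'
    intro y hy
    apply subset_closure
    intro h0
    apply hy
    show ηN N y = 0
    simp only [ηN]
    rw [show χN N y = 0 from h0]
    norm_num
  have hcs' : HasCompactSupport (fderiv ℝ (ηN N)) := hcs.fderiv (𝕜 := ℝ)
  have hcont : Continuous (fderiv ℝ (ηN N)) := (ηN_contDiff (N := N)).continuous_fderiv one_ne_zero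
  obtain ⟨C, hC⟩ := hcont.bounded_above_of_compact_support hcs'
  exact ⟨C, le_trans (norm_nonneg _) (hC 0), hC⟩


end HenonAux

open Filter Function HenonAux in
set_option maxHeartbeats 2000000 in
/-- **Energy identity for solutions of the Hénon equation stable outside a compact set.**
Let `a ≥ 0`, `N ≥ 3`, `1 < p < (N+2+2a)/(N-2)`, and let `u` be a positive `C²` solution of
`-Δu = |x|^a u^p` on `ℝ^N` which is stable outside a compact set and satisfies
`∇u ∈ L²(ℝ^N)` and `|x|^a u^(p+1) ∈ L¹(ℝ^N)`.  Then `∫ |∇u|² = ∫ |x|^a u^(p+1)`. -/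
theorem henon_energy_identity
    (N : ℕ) (hN : 3 ≤ N) (a p : ℝ) (ha : 0 ≤ a) (hp : 1 < p)
    (hsub : p < ((N : ℝ) + 2 + 2 * a) / ((N : ℝ) - 2))
    (u : EuclideanSpace ℝ (Fin N) → ℝ)
    (hu : ContDiff ℝ 2 u) (hupos : ∀ x, 0 < u x)
    (hequ : ∀ x, -lap u x = ‖x‖ ^ a * u x ^ p)
    (K : Set (EuclideanSpace ℝ (Fin N))) (hK : IsCompact K)
    (hstable : ∀ φ : EuclideanSpace ℝ (Fin N) → ℝ,
      ContDiff ℝ 1 φ → HasCompactSupport φ → Disjoint (tsupport φ) K →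
      0 ≤ (∫ x, ‖gradient φ x‖ ^ 2) - p * ∫ x, ‖x‖ ^ a * u x ^ (p - 1) * φ x ^ 2)
    (hgrad : Integrable (fun x => ‖gradient u x‖ ^ 2)
      (volume : Measure (EuclideanSpace ℝ (Fin N))))
    (hpot : Integrable (fun x => ‖x‖ ^ a * u x ^ (p + 1))
      (volume : Measure (EuclideanSpace ℝ (Fin N)))) :
    ∫ x, ‖gradient u x‖ ^ 2 = ∫ x, ‖x‖ ^ a * u x ^ (p + 1) := by
  classical
  have hp1 : (0:ℝ) < p - 1 := by linarith
  have hN2 : (0:ℝ) < (N:ℝ) - 2 := by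
    have h3 : (3:ℝ) ≤ (N:ℝ) := by exact_mod_cast hN
    linarith
  rw [lt_div_iff₀ hN2] at hsub
  have hexpand : ((N:ℝ)-2)*(p-1) = p*((N:ℝ)-2) - ((N:ℝ)-2) := by ring
  set θ : ℝ := ((((N:ℝ)-2)*(p-1) - 2*a)/2 + 2)/2 with hθdef
  have hθupper : θ < 2 := by
    rw [hθdef]; linarith
  have hβ1 : θ - 2 < 0 := by linarith
  set β2 : ℝ := (N:ℝ) - 2 - (2*θ + 2*a)/(p-1) with hβ2def
  have hβ2 : β2 < 0 := by
    rw [hβ2def, sub_neg, lt_div_iff₀ hp1]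
    rw [hθdef]
    nlinarith
  obtain ⟨Cb, hCb0, hCb⟩ := ηN_fderiv_bound (N := N)
  have hu1 : ContDiff ℝ 1 u := hu.of_le one_le_two
  have hfd : ContDiff ℝ 1 (fderiv ℝ u) := hu.fderiv_right (by norm_num)
  have hg2cont : Continuous (fun x : EuclideanSpace ℝ (Fin N) => ‖gradient u x‖ ^ 2) :=
    ((continuous_gradient hfd.continuous).norm).pow 2
  have hhnn : ∀ x : EuclideanSpace ℝ (Fin N), 0 ≤ ‖x‖ ^ a * u x ^ (p+1) := fun x =>
    mul_nonneg (Real.rpow_nonneg (norm_nonneg x) a) (Real.rpow_nonneg (hupos x).le _)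
  set M : ℝ := ∫ x, ‖x‖ ^ a * u x ^ (p + 1) with hMdef
  set c1 : ℝ := (volume (ball (0 : EuclideanSpace ℝ (Fin N)) 1)).toReal with hc1def
  -- step A applied to the cutoffs
  have hA : ∀ n : ℕ, 1 ≤ n →
      (∫ x, ζR N (n:ℝ) x ^ 2 * ‖gradient u x‖ ^ 2)
        + (∫ x, u x * (inner ℝ (gradient (fun y => ζR N (n:ℝ) y ^ 2) x) (gradient u x) : ℝ))
      = ∫ x, ζR N (n:ℝ) x ^ 2 * (‖x‖ ^ a * u x ^ (p + 1)) := by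
    intro n hn
    have hn0 : (0:ℝ) < (n:ℝ) := by exact_mod_cast Nat.lt_of_lt_of_le Nat.zero_lt_one hn
    exact stepA a p u hu hupos hequ _ (ζR_contDiff _) (ζR_hcs hn0)
  -- limit of the first term
  have hT1 : Tendsto (fun n : ℕ => ∫ x, ζR N (n:ℝ) x ^ 2 * ‖gradient u x‖ ^ 2) atTop
      (nhds (∫ x, ‖gradient u x‖ ^ 2)) := by
    apply tendsto_integral_of_dominated_convergence (fun x => ‖gradient u x‖ ^ 2)
      (fun n => (((ζR_contDiff (N := N) ((n:ℝ))).continuous.pow 2).mul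
        hg2cont).aestronglyMeasurable) hgrad
    · intro n
      apply Filter.Eventually.of_forall
      intro x
      have h1 : ζR N (n:ℝ) x ^ 2 ≤ 1 := pow_le_one₀ (ζR_nonneg _ x) (ζR_le_one _ x)
      have h0 : (0:ℝ) ≤ ‖gradient u x‖ ^ 2 := by positivity
      have hnn : (0:ℝ) ≤ ζR N (n:ℝ) x ^ 2 * ‖gradient u x‖ ^ 2 :=
        mul_nonneg (sq_nonneg _) h0
      simp only [Pi.mul_apply, Pi.pow_apply]
      rw [Real.norm_eq_abs, abs_of_nonneg hnn]
      exact mul_le_of_le_one_left h0 h1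
    · apply Filter.Eventually.of_forall
      intro x
      have hev : ∀ᶠ n : ℕ in atTop,
          ‖gradient u x‖ ^ 2 = ζR N (n:ℝ) x ^ 2 * ‖gradient u x‖ ^ 2 := by
        filter_upwards [eventually_ge_atTop (max 1 ⌈‖x‖⌉₊)] with n hn
        have h1 : (1:ℕ) ≤ n := le_trans (le_max_left _ _) hn
        have hn0 : (0:ℝ) < (n:ℝ) := by exact_mod_cast Nat.lt_of_lt_of_le Nat.zero_lt_one h1
        have h2 : ‖x‖ ≤ (n:ℝ) :=
          le_trans (Nat.le_ceil _) (by exact_mod_cast le_trans (le_max_right _ _) hn)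
        rw [ζR_one hn0 h2, one_pow, one_mul]
      exact Filter.Tendsto.congr' hev tendsto_const_nhds
  -- limit of the right-hand side
  have hT2 : Tendsto (fun n : ℕ => ∫ x, ζR N (n:ℝ) x ^ 2 * (‖x‖ ^ a * u x ^ (p + 1))) atTop
      (nhds (∫ x, ‖x‖ ^ a * u x ^ (p + 1))) := by
    apply tendsto_integral_of_dominated_convergence (fun x => ‖x‖ ^ a * u x ^ (p + 1))
      (fun n => (((ζR_contDiff (N := N) ((n:ℝ))).continuous.pow 2).aestronglyMeasurable.mul
        hpot.1)) hpot
    · intro n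
      apply Filter.Eventually.of_forall
      intro x
      have h1 : ζR N (n:ℝ) x ^ 2 ≤ 1 := pow_le_one₀ (ζR_nonneg _ x) (ζR_le_one _ x)
      have hnn : (0:ℝ) ≤ ζR N (n:ℝ) x ^ 2 * (‖x‖ ^ a * u x ^ (p + 1)) :=
        mul_nonneg (sq_nonneg _) (hhnn x)
      simp only [Pi.mul_apply, Pi.pow_apply]
      rw [Real.norm_eq_abs, abs_of_nonneg hnn]
      exact mul_le_of_le_one_left (hhnn x) h1
    · apply Filter.Eventually.of_forall
      intro x
      have hev : ∀ᶠ n : ℕ in atTop,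
          ‖x‖ ^ a * u x ^ (p + 1) = ζR N (n:ℝ) x ^ 2 * (‖x‖ ^ a * u x ^ (p + 1)) := by
        filter_upwards [eventually_ge_atTop (max 1 ⌈‖x‖⌉₊)] with n hn
        have h1 : (1:ℕ) ≤ n := le_trans (le_max_left _ _) hn
        have hn0 : (0:ℝ) < (n:ℝ) := by exact_mod_cast Nat.lt_of_lt_of_le Nat.zero_lt_one h1
        have h2 : ‖x‖ ≤ (n:ℝ) :=
          le_trans (Nat.le_ceil _) (by exact_mod_cast le_trans (le_max_right _ _) hn)
        rw [ζR_one hn0 h2, one_pow, one_mul]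
      exact Filter.Tendsto.congr' hev tendsto_const_nhds
  -- the tail sets
  have hmeas : ∀ n : ℕ, MeasurableSet {y : EuclideanSpace ℝ (Fin N) | (n:ℝ) ≤ ‖y‖} :=
    fun n => (isClosed_le continuous_const continuous_norm).measurableSet
  set Bseq : ℕ → ℝ := fun n =>
    ∫ x, Set.indicator {y : EuclideanSpace ℝ (Fin N) | (n:ℝ) ≤ ‖y‖}
      (fun y => ‖gradient u y‖ ^ 2) x with hBdef
  have hBtend : Tendsto Bseq atTop (nhds 0) := by
    have key := tendsto_integral_of_dominated_convergence
      (μ := (volume : Measure (EuclideanSpace ℝ (Fin N))))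
      (F := fun (n : ℕ) x => Set.indicator {y : EuclideanSpace ℝ (Fin N) | (n:ℝ) ≤ ‖y‖}
        (fun y => ‖gradient u y‖ ^ 2) x)
      (f := fun _ => (0:ℝ))
      (fun x => ‖gradient u x‖ ^ 2)
      (fun n => (hgrad.indicator (hmeas n)).1) hgrad
      (by
        intro n
        apply Filter.Eventually.of_forall
        intro x
        beta_reduce
        by_cases hx : x ∈ {y : EuclideanSpace ℝ (Fin N) | (n:ℝ) ≤ ‖y‖}
        · rw [Set.indicator_of_mem hx]
          rw [Real.norm_eq_abs, abs_of_nonneg (by positivity)]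
        · rw [Set.indicator_of_notMem hx]
          simp only [norm_zero]
          positivity)
      (by
        apply Filter.Eventually.of_forall
        intro x
        have hev : ∀ᶠ n : ℕ in atTop,
            (0:ℝ) = Set.indicator {y : EuclideanSpace ℝ (Fin N) | (n:ℝ) ≤ ‖y‖}
              (fun y => ‖gradient u y‖ ^ 2) x := by
          filter_upwards [eventually_gt_atTop ⌈‖x‖⌉₊] with n hn
          have hmem : x ∉ {y : EuclideanSpace ℝ (Fin N) | (n:ℝ) ≤ ‖y‖} := by
            simp only [Set.mem_setOf_eq, not_le]
            calc ‖x‖ ≤ (⌈‖x‖⌉₊ : ℝ) := Nat.le_ceil _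
              _ < (n:ℝ) := by exact_mod_cast hn
          exact (Set.indicator_of_notMem hmem _).symm
        exact Filter.Tendsto.congr' hev tendsto_const_nhds)
    simpa using key
  -- the key bound on the cross term
  have hclose : ∀ n : ℕ, 1 ≤ n →
      ‖∫ x, u x * (inner ℝ (gradient (fun y => ζR N (n:ℝ) y ^ 2) x) (gradient u x) : ℝ)‖
        ≤ (Cb/2) * (Bseq n + ((n:ℝ) ^ (θ - 2) * M + 2^N * c1 * (n:ℝ) ^ β2)) := by
    intro n hn
    set R : ℝ := (n:ℝ) with hRdef
    have hR1 : (1:ℝ) ≤ R := by rw [hRdef]; exact_mod_cast hn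
    have hR0 : (0:ℝ) < R := lt_of_lt_of_le one_pos hR1
    set D : EuclideanSpace ℝ (Fin N) → ℝ := fun x =>
      (Cb/2) * (Set.indicator {y : EuclideanSpace ℝ (Fin N) | R ≤ ‖y‖}
          (fun y => ‖gradient u y‖ ^ 2) x
        + (R ^ (θ - 2) * (‖x‖ ^ a * u x ^ (p + 1))
          + R ^ (β2 - (N:ℝ)) * Set.indicator (closedBall (0 : EuclideanSpace ℝ (Fin N)) (2*R))
              (fun _ => (1:ℝ)) x)) with hDdef
    have iInd1 : Integrable (fun x => Set.indicator {y : EuclideanSpace ℝ (Fin N) | R ≤ ‖y‖}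
        (fun y => ‖gradient u y‖ ^ 2) x) volume := hgrad.indicator (hmeas n)
    have iT : Integrable (fun x : EuclideanSpace ℝ (Fin N) =>
        R ^ (θ - 2) * (‖x‖ ^ a * u x ^ (p + 1))) volume := hpot.const_mul _
    have iB : Integrable (fun x : EuclideanSpace ℝ (Fin N) =>
        R ^ (β2 - (N:ℝ)) * Set.indicator (closedBall (0 : EuclideanSpace ℝ (Fin N)) (2*R))
          (fun _ => (1:ℝ)) x) volume := by
      apply Integrable.const_mul
      rw [integrable_indicator_iff measurableSet_closedBall]
      exact integrableOn_const measure_closedBall_lt_top.ne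
    have iD : Integrable D volume := ((iInd1.add (iT.add iB)).const_mul _)
    have hptw : ∀ x, ‖u x * (inner ℝ (gradient (fun y => ζR N R y ^ 2) x) (gradient u x) : ℝ)‖
        ≤ D x := by
      intro x
      by_cases hx : R ≤ ‖x‖ ∧ ‖x‖ ≤ 2*R
      · have hinner : |(inner ℝ (gradient (fun y => ζR N R y ^ 2) x) (gradient u x) : ℝ)|
            ≤ (R⁻¹ * Cb) * ‖gradient u x‖ :=
          le_trans (abs_real_inner_le_norm _ _)
            (mul_le_mul_of_nonneg_right (ζR_grad_sq_bound hR0 hCb x) (norm_nonneg _))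
        have h1 : ‖u x * (inner ℝ (gradient (fun y => ζR N R y ^ 2) x) (gradient u x) : ℝ)‖
            = u x * |(inner ℝ (gradient (fun y => ζR N R y ^ 2) x) (gradient u x) : ℝ)| := by
          rw [Real.norm_eq_abs, abs_mul, abs_of_pos (hupos x)]
        have h2 : u x * |(inner ℝ (gradient (fun y => ζR N R y ^ 2) x) (gradient u x) : ℝ)|
            ≤ Cb * ((u x / R) * ‖gradient u x‖) := by
          calc u x * |(inner ℝ (gradient (fun y => ζR N R y ^ 2) x) (gradient u x) : ℝ)|
              ≤ u x * ((R⁻¹ * Cb) * ‖gradient u x‖) :=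
                mul_le_mul_of_nonneg_left hinner (hupos x).le
            _ = Cb * ((u x / R) * ‖gradient u x‖) := by
                field_simp
        have h4 : (u x / R) * ‖gradient u x‖
            ≤ ((u x / R)^2 + ‖gradient u x‖^2)/2 := by
          nlinarith [sq_nonneg (u x / R - ‖gradient u x‖)]
        have hyoung := young_bound θ ha hp hR1 hx.1 (hupos x)
        have h6 : (u x / R)^2 ≤ R ^ (θ - 2) * (‖x‖ ^ a * u x ^ (p + 1)) + R ^ (β2 - (N:ℝ)) := by
          rw [div_pow, div_le_iff₀ (by positivity)]
          calc u x ^ 2 ≤ R ^ θ * (‖x‖ ^ a * u x ^ (p+1)) + R ^ (-(2*θ+2*a)/(p-1)) := hyoung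
            _ = (R ^ (θ - 2) * (‖x‖ ^ a * u x ^ (p + 1)) + R ^ (β2 - (N:ℝ))) * R ^ 2 := by
              rw [add_mul]
              congr 1
              · rw [mul_right_comm, ← Real.rpow_natCast R 2, ← Real.rpow_add hR0]
                norm_num
              · rw [← Real.rpow_natCast R 2, ← Real.rpow_add hR0]
                congr 1
                rw [hβ2def]
                push_cast
                ring
        have hind1 : Set.indicator {y : EuclideanSpace ℝ (Fin N) | R ≤ ‖y‖}
            (fun y => ‖gradient u y‖ ^ 2) x = ‖gradient u x‖ ^ 2 :=
          Set.indicator_of_mem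
            (show x ∈ {y : EuclideanSpace ℝ (Fin N) | R ≤ ‖y‖} from hx.1) _
        have hind2 : Set.indicator (closedBall (0 : EuclideanSpace ℝ (Fin N)) (2*R))
            (fun _ => (1:ℝ)) x = 1 := by
          apply Set.indicator_of_mem
          rw [mem_closedBall, dist_zero_right]
          exact hx.2
        rw [h1, hDdef]
        simp only [hind1, hind2, mul_one]
        calc u x * |(inner ℝ (gradient (fun y => ζR N R y ^ 2) x) (gradient u x) : ℝ)|
            ≤ Cb * ((u x / R) * ‖gradient u x‖) := h2
          _ ≤ Cb * (((u x / R)^2 + ‖gradient u x‖^2)/2) :=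
              mul_le_mul_of_nonneg_left h4 hCb0
          _ = (Cb/2) * ((u x / R)^2 + ‖gradient u x‖^2) := by ring
          _ ≤ (Cb/2) * ((R ^ (θ - 2) * (‖x‖ ^ a * u x ^ (p + 1)) + R ^ (β2 - (N:ℝ)))
              + ‖gradient u x‖^2) := by
              apply mul_le_mul_of_nonneg_left _ (by positivity)
              exact add_le_add_left h6 _
          _ = (Cb/2) * (‖gradient u x‖ ^ 2 + (R ^ (θ - 2) * (‖x‖ ^ a * u x ^ (p + 1))
              + R ^ (β2 - (N:ℝ)))) := by ring
      · rw [not_and_or] at hx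
        have hz : gradient (fun y => ζR N R y ^ 2) x = 0 := by
          rcases hx with h | h
          · exact ζR_grad_sq_zero_of_lt hR0 (not_le.1 h)
          · exact ζR_grad_sq_zero_of_gt hR0 (not_le.1 h)
        rw [hz, inner_zero_left, mul_zero, norm_zero, hDdef]
        apply mul_nonneg (by positivity)
        apply add_nonneg
        · exact Set.indicator_nonneg (fun y _ => by positivity) x
        · apply add_nonneg
          · exact mul_nonneg (by positivity) (hhnn x)
          · exact mul_nonneg (by positivity)
              (Set.indicator_nonneg (fun _ _ => zero_le_one) x)
    have hnormle : ‖∫ x, u x * (inner ℝ (gradient (fun y => ζR N R y ^ 2) x) (gradient u x) : ℝ)‖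
        ≤ ∫ x, D x := norm_integral_le_of_norm_le iD (Filter.Eventually.of_forall hptw)
    have hDval : (∫ x, D x)
        = (Cb/2) * (Bseq n + (R ^ (θ - 2) * M + 2^N * c1 * R ^ β2)) := by
      rw [hDdef]
      rw [integral_const_mul]
      have iTB : Integrable (fun x : EuclideanSpace ℝ (Fin N) =>
          R ^ (θ - 2) * (‖x‖ ^ a * u x ^ (p + 1))
            + R ^ (β2 - (N:ℝ)) * Set.indicator (closedBall (0 : EuclideanSpace ℝ (Fin N)) (2*R))
                (fun _ => (1:ℝ)) x) volume := iT.add iB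
      rw [integral_add iInd1 iTB, integral_add iT iB]
      rw [integral_const_mul, integral_const_mul]
      have hvol : (∫ x, Set.indicator (closedBall (0 : EuclideanSpace ℝ (Fin N)) (2*R))
          (fun _ => (1:ℝ)) x) = (2*R)^N * c1 := by
        rw [integral_indicator_const (1:ℝ) measurableSet_closedBall]
        rw [measureReal_def, Measure.addHaar_closedBall _ _ (by positivity)]
        rw [smul_eq_mul, mul_one, ENNReal.toReal_mul, ENNReal.toReal_ofReal (by positivity)]
        rw [hc1def, finrank_euclideanSpace_fin]
      rw [hvol]
      have hpow : R ^ (β2 - (N:ℝ)) * ((2*R)^N * c1) = 2^N * c1 * R ^ β2 := by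
        rw [mul_pow, ← Real.rpow_natCast R N]
        rw [show R ^ (β2 - (N:ℝ)) * ((2:ℝ)^N * R ^ ((N:ℕ):ℝ) * c1)
          = (2:ℝ)^N * c1 * (R ^ (β2 - (N:ℝ)) * R ^ ((N:ℕ):ℝ)) by ring]
        rw [← Real.rpow_add hR0]
        norm_num
      rw [hpow, hBdef, hMdef]
    rw [hDval] at hnormle
    exact hnormle
  -- limits of the power terms
  have hpow1 : Tendsto (fun n : ℕ => ((n:ℝ)) ^ (θ - 2)) atTop (nhds 0) := by
    have h := tendsto_rpow_neg_atTop (show (0:ℝ) < -(θ-2) by linarith)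
    simp only [neg_neg] at h
    exact h.comp (tendsto_natCast_atTop_atTop (R := ℝ))
  have hpow2 : Tendsto (fun n : ℕ => ((n:ℝ)) ^ β2) atTop (nhds 0) := by
    have h := tendsto_rpow_neg_atTop (show (0:ℝ) < -β2 by linarith)
    simp only [neg_neg] at h
    exact h.comp (tendsto_natCast_atTop_atTop (R := ℝ))
  have hboundtend : Tendsto (fun n : ℕ =>
      (Cb/2) * (Bseq n + ((n:ℝ) ^ (θ - 2) * M + 2^N * c1 * (n:ℝ) ^ β2))) atTop (nhds 0) := by
    have h := (hBtend.add ((hpow1.mul_const M).add (hpow2.const_mul (2^N * c1)))).const_mul (Cb/2)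
    have h0 : (Cb/2) * ((0:ℝ) + (0 * M + (2^N * c1) * 0)) = 0 := by ring
    rw [h0] at h
    exact h
  have hT3 : Tendsto (fun n : ℕ =>
      ∫ x, u x * (inner ℝ (gradient (fun y => ζR N (n:ℝ) y ^ 2) x) (gradient u x) : ℝ)) atTop
      (nhds 0) := by
    have habs : Tendsto (fun n : ℕ =>
        ‖∫ x, u x * (inner ℝ (gradient (fun y => ζR N (n:ℝ) y ^ 2) x) (gradient u x) : ℝ)‖) atTop
        (nhds 0) := by
      apply squeeze_zero' (Filter.Eventually.of_forall (fun n => norm_nonneg _))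
        _ hboundtend
      exact eventually_atTop.2 ⟨1, hclose⟩
    rw [tendsto_zero_iff_abs_tendsto_zero]
    simpa [Real.norm_eq_abs, Function.comp_def] using habs
  -- conclusion
  have hfin := hT1.add hT3
  rw [add_zero] at hfin
  have heq : (fun n : ℕ => (∫ x, ζR N (n:ℝ) x ^ 2 * ‖gradient u x‖ ^ 2)
      + (∫ x, u x * (inner ℝ (gradient (fun y => ζR N (n:ℝ) y ^ 2) x) (gradient u x) : ℝ)))
      =ᶠ[atTop] (fun n : ℕ => ∫ x, ζR N (n:ℝ) x ^ 2 * (‖x‖ ^ a * u x ^ (p + 1))) :=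
    eventually_atTop.2 ⟨1, hA⟩
  have hT2' := hfin.congr' heq
  exact tendsto_nhds_unique hT2' hT2
end

section
/- Let p, q, a, b ≥ 0 with pq > 1, Ω ⊆ ℝ^N open, and let (u, v) be a positive pointwise stable solution of the Hénon–Lane–Emden system −Δu = |x|^a v^p, −Δv = |x|^b u^q in Ω. Then for every test function φ ∈ C_c¹(Ω) the stability inequality holds: √(pq) ∫_Ω |x|^{(a+b)/2} v^{(p−1)/2} u^{(q−1)/2} φ² ≤ ∫_Ω |∇φ|². -/
open MeasureTheory Real Metric

section Aux

variable {N : ℕ}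

local notation "E" => EuclideanSpace ℝ (Fin N)

private noncomputable def sgl (i : Fin N) : EuclideanSpace ℝ (Fin N) :=
  EuclideanSpace.single i 1

/-- first partial derivative -/
private noncomputable def pd (f : EuclideanSpace ℝ (Fin N) → ℝ) (i : Fin N)
    (y : EuclideanSpace ℝ (Fin N)) : ℝ :=
  fderiv ℝ f y (sgl i)

private lemma lap_eq (f : E → ℝ) (x : E) : lap f x = ∑ i, pd (pd f i) i x := rfl

private lemma sqrt_rpow' {x : ℝ} (hx : 0 ≤ x) (c : ℝ) :
    Real.sqrt (x ^ c) = x ^ (c / 2) := by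
  rw [Real.sqrt_eq_rpow, ← Real.rpow_mul hx]
  ring_nf

private lemma grad_norm_sq (f : E → ℝ) (x : E) :
    ‖gradient f x‖ ^ 2 = ∑ i, pd f i x ^ 2 := by
  have h1 : ∀ i : Fin N, gradient f x i = pd f i x := by
    intro i
    have h : inner (𝕜 := ℝ) (gradient f x) (EuclideanSpace.single i (1 : ℝ))
        = fderiv ℝ f x (EuclideanSpace.single i (1 : ℝ)) :=
      InnerProductSpace.toDual_symm_apply
    simp only [pd, sgl]
    rw [← h, EuclideanSpace.inner_single_right]
    simp
  rw [EuclideanSpace.norm_eq, Real.sq_sqrt (by positivity)]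
  simp [h1]

/-- integral of a directional derivative of a compactly supported function vanishes -/
private lemma integral_F'_eq_zero (f : E → ℝ) (f' : E → (E →L[ℝ] ℝ)) (v : E)
    (hd : ∀ x, HasFDerivAt f (f' x) x)
    (hc : Continuous fun x => f' x v)
    (hfs : HasCompactSupport f)
    (hfs' : HasCompactSupport fun x => f' x v) :
    ∫ x, f' x v = 0 := by
  have hfd : Differentiable ℝ f := fun x => (hd x).differentiableAt
  have hfe : ∀ x, fderiv ℝ f x = f' x := fun x => (hd x).fderiv
  have h1 : Integrable (fun x => fderiv ℝ f x v * (fun _ => (1:ℝ)) x) (volume : Measure E) := by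
    have : Integrable (fun x => f' x v) (volume : Measure E) :=
      hc.integrable_of_hasCompactSupport hfs'
    simpa [hfe] using this
  have h2 : Integrable (fun x => f x * fderiv ℝ (fun _ => (1:ℝ)) x v) (volume : Measure E) := by
    simp
  have h3 : Integrable (fun x => f x * (fun _ => (1:ℝ)) x) (volume : Measure E) := by
    simpa using Continuous.integrable_of_hasCompactSupport (μ := (volume : Measure E))
      hfd.continuous hfs
  have h := integral_mul_fderiv_eq_neg_fderiv_mul_of_integrable h1 h2 h3
    (fun x _ => hfd x) (fun x _ => differentiableAt_const 1)
  simp only [hfe, fderiv_const, fderiv_fun_const, Pi.zero_apply, ContinuousLinearMap.zero_apply, mul_zero,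
    mul_one, integral_zero] at h
  linarith

private lemma integrableOn_helper {f : E → ℝ} {Ω S : Set E}
    (hf : ContinuousOn f Ω) (hS : IsCompact S) (hSΩ : S ⊆ Ω) (hΩ : IsOpen Ω)
    (h0 : ∀ x ∈ Ω, x ∉ S → f x = 0) :
    IntegrableOn f Ω (volume : Measure E) := by
  have h1 : IntegrableOn f S volume := (hf.mono hSΩ).integrableOn_compact hS
  have h2 : IntegrableOn f (Ω \ S) volume := by
    have hz : IntegrableOn (fun _ : E => (0:ℝ)) (Ω \ S) volume := integrableOn_zero
    exact hz.congr_fun (fun x hx => (h0 x hx.1 hx.2).symm)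
      (hΩ.measurableSet.diff hS.isClosed.measurableSet)
  exact (h1.union h2).mono_set (fun x hx => by
    by_cases h : x ∈ S
    · exact Set.mem_union_left _ h
    · exact Set.mem_union_right _ ⟨hx, h⟩)

set_option maxHeartbeats 1000000 in
/-- **Picone-type inequality**: for a positive smooth function `w` on `Ω` and a `C¹`
compactly supported test function `φ`, `∫ (-Δw/w) φ² ≤ ∫ |∇φ|²`. -/
private lemma picone (Ω : Set E) (hΩ : IsOpen Ω)
    (w : E → ℝ) (hw : ContDiffOn ℝ (⊤ : ℕ∞) w Ω) (hwpos : ∀ x ∈ Ω, 0 < w x)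
    (φ : E → ℝ) (hφ : ContDiff ℝ 1 φ) (hφs : HasCompactSupport φ)
    (hφΩ : tsupport φ ⊆ Ω) :
    ∫ x in Ω, (-lap w x / w x) * φ x ^ 2 ≤ ∫ x in Ω, ‖gradient φ x‖ ^ 2 := by
  classical
  have hw' : DifferentiableOn ℝ w Ω := hw.differentiableOn (by simp)
  have hw1s : ∀ i : Fin N, ContDiffOn ℝ (⊤ : ℕ∞) (pd w i) Ω := fun i =>
    (ContDiffOn.fderiv_of_isOpen (m := (⊤:ℕ∞)) hw hΩ (by simp)).clm_apply contDiffOn_const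
  have hw2c : ∀ i : Fin N, ContinuousOn (fun x => pd (pd w i) i x) Ω := fun i =>
    ((ContDiffOn.fderiv_of_isOpen (m := (⊤:ℕ∞)) (hw1s i) hΩ (by simp)).clm_apply contDiffOn_const).continuousOn
  have hwd : ∀ x ∈ Ω, HasFDerivAt w (fderiv ℝ w x) x := fun x hx =>
    (hw'.differentiableAt (hΩ.mem_nhds hx)).hasFDerivAt
  have hw1d : ∀ (i : Fin N), ∀ x ∈ Ω, HasFDerivAt (pd w i) (fderiv ℝ (pd w i) x) x :=
    fun i x hx => (((hw1s i).differentiableOn (by simp)).differentiableAt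
      (hΩ.mem_nhds hx)).hasFDerivAt
  have hφd : ∀ x, HasFDerivAt φ (fderiv ℝ φ x) x := fun x =>
    ((hφ.differentiable one_ne_zero) x).hasFDerivAt
  have hφc' : Continuous (fderiv ℝ φ) := hφ.continuous_fderiv one_ne_zero
  have hφ0 : ∀ x ∉ tsupport φ, φ x = 0 := fun x hx => image_eq_zero_of_notMem_tsupport hx
  have hφ'0 : ∀ x ∉ tsupport φ, fderiv ℝ φ x = 0 := by
    intro x hx
    by_contra h
    exact hx (support_fderiv_subset ℝ (Function.mem_support.mpr h))
  -- the vector field whose divergence we integrate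
  set F : Fin N → E → ℝ := fun i y =>
    if y ∈ Ω then φ y * φ y * pd w i y * (w y)⁻¹ else 0 with hFdef
  set Fc : Fin N → E → (E →L[ℝ] ℝ) := fun i x =>
    if x ∈ Ω then
      (φ x * φ x * pd w i x) •
          ((-(ContinuousLinearMap.mulLeftRight ℝ ℝ (w x)⁻¹ (w x)⁻¹)).comp (fderiv ℝ w x))
        + (w x)⁻¹ • ((φ x * φ x) • fderiv ℝ (pd w i) x
            + pd w i x • (φ x • fderiv ℝ φ x + φ x • fderiv ℝ φ x))
    else 0 with hFcdef
  have hFd : ∀ (i : Fin N) (x : E), HasFDerivAt (F i) (Fc i x) x := by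
    intro i x
    by_cases hx : x ∈ Ω
    · have heq : F i =ᶠ[nhds x] fun y => φ y * φ y * pd w i y * (w y)⁻¹ :=
        Filter.eventuallyEq_of_mem (hΩ.mem_nhds hx) (fun y hy => if_pos hy)
      have hne : w x ≠ 0 := (hwpos x hx).ne'
      have h1 : HasFDerivAt (fun y => φ y * φ y * pd w i y)
          ((φ x * φ x) • fderiv ℝ (pd w i) x
            + pd w i x • (φ x • fderiv ℝ φ x + φ x • fderiv ℝ φ x)) x :=
        ((hφd x).mul (hφd x)).mul (hw1d i x hx)
      have h2 : HasFDerivAt (fun y => (w y)⁻¹)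
          ((-(ContinuousLinearMap.mulLeftRight ℝ ℝ (w x)⁻¹ (w x)⁻¹)).comp (fderiv ℝ w x)) x :=
        (hasFDerivAt_inv' (𝕜 := ℝ) hne).comp x (hwd x hx)
      have h3 := h1.mul h2
      simp only [hFcdef]
      rw [if_pos hx]
      exact h3.congr_of_eventuallyEq heq
    · have hx' : x ∉ tsupport φ := fun h => hx (hφΩ h)
      have hU : (tsupport φ)ᶜ ∈ nhds x := (isClosed_tsupport φ).isOpen_compl.mem_nhds hx'
      have heq : F i =ᶠ[nhds x] fun _ => (0 : ℝ) := by
        refine Filter.eventuallyEq_of_mem hU (fun y hy => ?_)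
        simp only [hFdef]
        split
        · rw [hφ0 y hy]; ring
        · rfl
      simp only [hFcdef]
      rw [if_neg hx]
      exact (hasFDerivAt_const (0 : ℝ) x).congr_of_eventuallyEq heq
  have hF0 : ∀ (i : Fin N), ∀ x ∉ tsupport φ, F i x = 0 := by
    intro i x hx
    simp only [hFdef]
    split
    · rw [hφ0 x hx]; ring
    · rfl
  have hFc0 : ∀ (i : Fin N), ∀ x ∉ tsupport φ, Fc i x = 0 := by
    intro i x hx
    simp only [hFcdef]
    split
    · rw [hφ0 x hx, hφ'0 x hx]; simp
    · rfl
  have hFcc : ∀ i : Fin N, Continuous fun x => Fc i x (sgl i) := by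
    intro i
    rw [continuous_iff_continuousAt]
    intro x
    by_cases hx : x ∈ Ω
    · have heq : (fun y => Fc i y (sgl i)) =ᶠ[nhds x] fun y =>
          (φ y * φ y * pd w i y) * -((w y)⁻¹ * fderiv ℝ w y (sgl i) * (w y)⁻¹)
            + (w y)⁻¹ * ((φ y * φ y) * pd (pd w i) i y
              + pd w i y * (φ y * fderiv ℝ φ y (sgl i) + φ y * fderiv ℝ φ y (sgl i))) := by
        refine Filter.eventuallyEq_of_mem (hΩ.mem_nhds hx) (fun y hy => ?_)
        simp [hFcdef, if_pos hy, pd, ContinuousLinearMap.mulLeftRight_apply]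
        ring
      have hg : ContinuousOn (fun y =>
          (φ y * φ y * pd w i y) * -((w y)⁻¹ * fderiv ℝ w y (sgl i) * (w y)⁻¹)
            + (w y)⁻¹ * ((φ y * φ y) * pd (pd w i) i y
              + pd w i y * (φ y * fderiv ℝ φ y (sgl i) + φ y * fderiv ℝ φ y (sgl i)))) Ω := by
        have hwinv : ContinuousOn (fun y => (w y)⁻¹) Ω :=
          hw.continuousOn.inv₀ (fun y hy => (hwpos y hy).ne')
        have hw1c : ContinuousOn (fun y => pd w i y) Ω := (hw1s i).continuousOn
        have hφc : Continuous φ := hφ.continuous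
        have hφ'c : Continuous fun y => fderiv ℝ φ y (sgl i) :=
          hφc'.clm_apply continuous_const
        exact (((hφc.mul hφc).continuousOn.mul hw1c).mul
            ((hwinv.mul hw1c).mul hwinv).neg).add
          (hwinv.mul (((hφc.mul hφc).continuousOn.mul (hw2c i)).add
            (hw1c.mul ((hφc.mul hφ'c).add (hφc.mul hφ'c)).continuousOn)))
      exact (hg.continuousAt (hΩ.mem_nhds hx)).congr heq.symm
    · have hx' : x ∉ tsupport φ := fun h => hx (hφΩ h)
      have hU : (tsupport φ)ᶜ ∈ nhds x := (isClosed_tsupport φ).isOpen_compl.mem_nhds hx'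
      have heq : (fun y => Fc i y (sgl i)) =ᶠ[nhds x] fun _ => (0 : ℝ) :=
        Filter.eventuallyEq_of_mem hU (fun y hy => by rw [hFc0 i y hy]; rfl)
      exact continuousAt_const.congr heq.symm
  have hFs : ∀ i : Fin N, HasCompactSupport (F i) := fun i =>
    HasCompactSupport.intro hφs (hF0 i)
  have hFcs : ∀ i : Fin N, HasCompactSupport fun x => Fc i x (sgl i) := fun i =>
    HasCompactSupport.intro hφs (fun x hx => by rw [hFc0 i x hx]; rfl)
  have hdiv : ∀ i : Fin N, ∫ x in Ω, Fc i x (sgl i) = 0 := by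
    intro i
    rw [setIntegral_eq_integral_of_forall_compl_eq_zero
      (fun x hx => by simp only [hFcdef]; rw [if_neg hx]; rfl)]
    exact integral_F'_eq_zero (F i) (Fc i) (sgl i) (hFd i) (hFcc i) (hFs i) (hFcs i)
  -- pointwise inequality
  have key : ∀ x ∈ Ω, (-lap w x / w x) * φ x ^ 2 ≤
      (∑ i, pd φ i x ^ 2) - ∑ i, Fc i x (sgl i) := by
    intro x hx
    have hne : w x ≠ 0 := (hwpos x hx).ne'
    have hFval : ∀ i : Fin N, Fc i x (sgl i) =
        (2 * (φ x / w x) * pd w i x * pd φ i x - (φ x / w x) ^ 2 * pd w i x ^ 2)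
          + (φ x * φ x / w x) * pd (pd w i) i x := by
      intro i
      simp only [hFcdef]
      rw [if_pos hx]
      simp only [ContinuousLinearMap.add_apply, ContinuousLinearMap.coe_smul',
        Pi.smul_apply, ContinuousLinearMap.coe_comp', Function.comp_apply,
        ContinuousLinearMap.neg_apply, ContinuousLinearMap.mulLeftRight_apply,
        smul_eq_mul]
      show φ x * φ x * pd w i x * -((w x)⁻¹ * pd w i x * (w x)⁻¹)
          + (w x)⁻¹ * (φ x * φ x * pd (pd w i) i x
            + pd w i x * (φ x * pd φ i x + φ x * pd φ i x)) = _
      field_simp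
      ring
    have expand : ∑ i, Fc i x (sgl i) =
        (∑ i, (2 * (φ x / w x) * pd w i x * pd φ i x - (φ x / w x) ^ 2 * pd w i x ^ 2))
          + (φ x * φ x / w x) * lap w x := by
      rw [lap_eq, Finset.mul_sum, ← Finset.sum_add_distrib]
      exact Finset.sum_congr rfl fun i _ => hFval i
    have per : ∀ i ∈ Finset.univ (α := Fin N),
        2 * (φ x / w x) * pd w i x * pd φ i x - (φ x / w x) ^ 2 * pd w i x ^ 2
          ≤ pd φ i x ^ 2 := by
      intro i _
      nlinarith [sq_nonneg (pd φ i x - (φ x / w x) * pd w i x)]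
    have hsum := Finset.sum_le_sum per
    rw [expand]
    have hid : (-lap w x / w x) * φ x ^ 2 = -(φ x * φ x / w x * lap w x) := by ring
    rw [hid]
    linarith
  -- integrability
  have hSc : IsCompact (tsupport φ) := hφs
  have hlapc : ContinuousOn (fun x => (-lap w x / w x) * φ x ^ 2) Ω := by
    have h1 : ContinuousOn (fun x => lap w x) Ω := by
      have : ∀ x, lap w x = ∑ i, pd (pd w i) i x := fun x => lap_eq w x
      simp only [this]
      exact continuousOn_finset_sum _ (fun i _ => hw2c i)
    exact ((h1.neg.div hw.continuousOn (fun x hx => (hwpos x hx).ne')).mul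
      (hφ.continuous.pow 2).continuousOn)
  have intL : IntegrableOn (fun x => (-lap w x / w x) * φ x ^ 2) Ω volume :=
    integrableOn_helper hlapc hSc hφΩ hΩ (fun x _ hx => by rw [hφ0 x hx]; ring)
  have intG : Integrable (fun x => ∑ i, pd φ i x ^ 2) (volume : Measure E) := by
    refine Continuous.integrable_of_hasCompactSupport ?_ ?_
    · exact continuous_finset_sum _ (fun i _ => (hφc'.clm_apply continuous_const).pow 2)
    · refine HasCompactSupport.intro hφs (fun x hx => ?_)
      have : fderiv ℝ φ x = 0 := hφ'0 x hx
      simp [pd, this]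
  have intFc : ∀ i : Fin N, Integrable (fun x => Fc i x (sgl i)) (volume : Measure E) :=
    fun i => (hFcc i).integrable_of_hasCompactSupport (hFcs i)
  have intFsum : Integrable (fun x => ∑ i, Fc i x (sgl i)) (volume : Measure E) :=
    integrable_finset_sum _ (fun i _ => intFc i)
  calc ∫ x in Ω, (-lap w x / w x) * φ x ^ 2
      ≤ ∫ x in Ω, ((∑ i, pd φ i x ^ 2) - ∑ i, Fc i x (sgl i)) :=
        setIntegral_mono_on intL (intG.integrableOn.sub intFsum.integrableOn)
          hΩ.measurableSet key
    _ = (∫ x in Ω, ∑ i, pd φ i x ^ 2) - ∫ x in Ω, ∑ i, Fc i x (sgl i) :=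
        integral_sub intG.integrableOn intFsum.integrableOn
    _ = ∫ x in Ω, ∑ i, pd φ i x ^ 2 := by
        rw [integral_finset_sum _ (fun i _ => (intFc i).integrableOn)]
        simp [hdiv]
    _ = ∫ x in Ω, ‖gradient φ x‖ ^ 2 :=
        setIntegral_congr_fun hΩ.measurableSet (fun x _ => (grad_norm_sq φ x).symm)

end Aux

set_option maxHeartbeats 1000000 in
/-- **Stability inequality for the Hénon–Lane–Emden system.**
Let `p, q, a, b ≥ 0` with `pq > 1`, let `Ω ⊆ ℝ^N` be open, and let `(u, v)` be a positive
pointwise stable solution of `-Δu = |x|^a v^p`, `-Δv = |x|^b u^q` in `Ω` (i.e. there exist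
positive smooth `ζ, η` with `-Δζ = p|x|^a v^(p-1) η` and `-Δη = q|x|^b u^(q-1) ζ` in `Ω`).
Then for every `φ ∈ C_c¹(Ω)`,
`√(pq) ∫_Ω |x|^((a+b)/2) v^((p-1)/2) u^((q-1)/2) φ² ≤ ∫_Ω |∇φ|²`. -/
theorem henon_lane_emden_stability_inequality
    (N : ℕ) (p q a b : ℝ) (hp : 0 ≤ p) (hq : 0 ≤ q) (ha : 0 ≤ a) (hb : 0 ≤ b)
    (hpq : 1 < p * q)
    (Ω : Set (EuclideanSpace ℝ (Fin N))) (hΩ : IsOpen Ω)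
    (u v : EuclideanSpace ℝ (Fin N) → ℝ)
    (hu : ContDiffOn ℝ 2 u Ω) (hv : ContDiffOn ℝ 2 v Ω)
    (hupos : ∀ x ∈ Ω, 0 < u x) (hvpos : ∀ x ∈ Ω, 0 < v x)
    (hequ : ∀ x ∈ Ω, -lap u x = ‖x‖ ^ a * v x ^ p)
    (heqv : ∀ x ∈ Ω, -lap v x = ‖x‖ ^ b * u x ^ q)
    (ζ η : EuclideanSpace ℝ (Fin N) → ℝ)
    (hζ : ContDiffOn ℝ (⊤ : ℕ∞) ζ Ω) (hη : ContDiffOn ℝ (⊤ : ℕ∞) η Ω)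
    (hζpos : ∀ x ∈ Ω, 0 < ζ x) (hηpos : ∀ x ∈ Ω, 0 < η x)
    (heqζ : ∀ x ∈ Ω, -lap ζ x = p * (‖x‖ ^ a * v x ^ (p - 1)) * η x)
    (heqη : ∀ x ∈ Ω, -lap η x = q * (‖x‖ ^ b * u x ^ (q - 1)) * ζ x) :
    ∀ φ : EuclideanSpace ℝ (Fin N) → ℝ,
      ContDiff ℝ 1 φ → HasCompactSupport φ → tsupport φ ⊆ Ω →
      Real.sqrt (p * q) *
          (∫ x in Ω, ‖x‖ ^ ((a + b) / 2) * v x ^ ((p - 1) / 2) * u x ^ ((q - 1) / 2) *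
            φ x ^ 2) ≤
        ∫ x in Ω, ‖gradient φ x‖ ^ 2 := by
  intro φ hφ hφs hφΩ
  have hφ0 : ∀ x ∉ tsupport φ, φ x = 0 := fun x hx => image_eq_zero_of_notMem_tsupport hx
  set T1 : EuclideanSpace ℝ (Fin N) → ℝ :=
    fun x => p * (‖x‖ ^ a * v x ^ (p - 1)) * η x / ζ x with hT1def
  set T2 : EuclideanSpace ℝ (Fin N) → ℝ :=
    fun x => q * (‖x‖ ^ b * u x ^ (q - 1)) * ζ x / η x with hT2def
  -- the two Picone inequalities
  have Pζ : ∫ x in Ω, T1 x * φ x ^ 2 ≤ ∫ x in Ω, ‖gradient φ x‖ ^ 2 := by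
    have h := picone Ω hΩ ζ hζ hζpos φ hφ hφs hφΩ
    have heq : ∫ x in Ω, T1 x * φ x ^ 2 = ∫ x in Ω, (-lap ζ x / ζ x) * φ x ^ 2 :=
      setIntegral_congr_fun hΩ.measurableSet (fun x hx => by rw [heqζ x hx])
    linarith [heq ▸ h]
  have Pη : ∫ x in Ω, T2 x * φ x ^ 2 ≤ ∫ x in Ω, ‖gradient φ x‖ ^ 2 := by
    have h := picone Ω hΩ η hη hηpos φ hφ hφs hφΩ
    have heq : ∫ x in Ω, T2 x * φ x ^ 2 = ∫ x in Ω, (-lap η x / η x) * φ x ^ 2 :=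
      setIntegral_congr_fun hΩ.measurableSet (fun x hx => by rw [heqη x hx])
    linarith [heq ▸ h]
  -- pointwise AM-GM
  have key : ∀ x ∈ Ω,
      Real.sqrt (p * q) * (‖x‖ ^ ((a + b) / 2) * v x ^ ((p - 1) / 2) * u x ^ ((q - 1) / 2) *
        φ x ^ 2) ≤ (1 / 2) * (T1 x * φ x ^ 2 + T2 x * φ x ^ 2) := by
    intro x hx
    have hζx := hζpos x hx
    have hηx := hηpos x hx
    have hvx := hvpos x hx
    have hux := hupos x hx
    have hX : 0 ≤ T1 x := by
      rw [hT1def]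
      have : (0:ℝ) ≤ ‖x‖ ^ a := Real.rpow_nonneg (norm_nonneg x) a
      have : (0:ℝ) ≤ v x ^ (p - 1) := Real.rpow_nonneg hvx.le _
      positivity
    have hY : 0 ≤ T2 x := by
      rw [hT2def]
      have : (0:ℝ) ≤ ‖x‖ ^ b := Real.rpow_nonneg (norm_nonneg x) b
      have : (0:ℝ) ≤ u x ^ (q - 1) := Real.rpow_nonneg hux.le _
      positivity
    have hXY : T1 x * T2 x =
        (p * q) * ((‖x‖ ^ a * ‖x‖ ^ b) * (v x ^ (p - 1) * u x ^ (q - 1))) := by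
      rw [hT1def, hT2def]
      field_simp
    have hsqrtN : Real.sqrt (‖x‖ ^ a * ‖x‖ ^ b) = ‖x‖ ^ ((a + b) / 2) := by
      by_cases hab : a + b = 0
      · have ha0 : a = 0 := by linarith
        have hb0 : b = 0 := by linarith
        simp [ha0, hb0, hab]
      · rw [← Real.rpow_add' (norm_nonneg x) hab, sqrt_rpow' (norm_nonneg x)]
    have hsqrtV : Real.sqrt (v x ^ (p - 1) * u x ^ (q - 1)) =
        v x ^ ((p - 1) / 2) * u x ^ ((q - 1) / 2) := by
      rw [Real.sqrt_mul (Real.rpow_nonneg hvx.le _), sqrt_rpow' hvx.le, sqrt_rpow' hux.le]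
    have hsqrt : Real.sqrt (T1 x * T2 x) =
        Real.sqrt (p * q) * (‖x‖ ^ ((a + b) / 2) * v x ^ ((p - 1) / 2) *
          u x ^ ((q - 1) / 2)) := by
      rw [hXY, Real.sqrt_mul (by positivity),
        Real.sqrt_mul (mul_nonneg (Real.rpow_nonneg (norm_nonneg x) a)
          (Real.rpow_nonneg (norm_nonneg x) b)), hsqrtN, hsqrtV]
      ring
    have hAMGM : Real.sqrt (T1 x * T2 x) ≤ (T1 x + T2 x) / 2 := by
      rw [Real.sqrt_mul hX]
      nlinarith [sq_nonneg (Real.sqrt (T1 x) - Real.sqrt (T2 x)), Real.sq_sqrt hX,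
        Real.sq_sqrt hY, Real.sqrt_nonneg (T1 x), Real.sqrt_nonneg (T2 x)]
    have hφ2 : 0 ≤ φ x ^ 2 := sq_nonneg _
    nlinarith [mul_le_mul_of_nonneg_right (hsqrt ▸ hAMGM) hφ2]
  -- integrability
  have hSc : IsCompact (tsupport φ) := hφs
  have hnormc : ∀ c : ℝ, 0 ≤ c → Continuous fun x : EuclideanSpace ℝ (Fin N) => ‖x‖ ^ c :=
    fun c hc => continuous_norm.rpow_const (fun x => Or.inr hc)
  have intL0 : IntegrableOn (fun x => Real.sqrt (p * q) *
      (‖x‖ ^ ((a + b) / 2) * v x ^ ((p - 1) / 2) * u x ^ ((q - 1) / 2) * φ x ^ 2)) Ω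
      volume := by
    refine integrableOn_helper ?_ hSc hφΩ hΩ (fun x _ hx => by rw [hφ0 x hx]; ring)
    refine continuousOn_const.mul ?_
    refine ((((hnormc _ (by positivity)).continuousOn.mul
      (hv.continuousOn.rpow_const (fun x hx => Or.inl (hvpos x hx).ne'))).mul
      (hu.continuousOn.rpow_const (fun x hx => Or.inl (hupos x hx).ne'))).mul
      (hφ.continuous.pow 2).continuousOn)
  have intT1 : IntegrableOn (fun x => T1 x * φ x ^ 2) Ω volume := by
    refine integrableOn_helper ?_ hSc hφΩ hΩ (fun x _ hx => by rw [hφ0 x hx]; ring)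
    refine ContinuousOn.mul ?_ (hφ.continuous.pow 2).continuousOn
    rw [hT1def]
    exact ((continuousOn_const.mul ((hnormc a ha).continuousOn.mul
      (hv.continuousOn.rpow_const (fun x hx => Or.inl (hvpos x hx).ne')))).mul
      hη.continuousOn).div hζ.continuousOn (fun x hx => (hζpos x hx).ne')
  have intT2 : IntegrableOn (fun x => T2 x * φ x ^ 2) Ω volume := by
    refine integrableOn_helper ?_ hSc hφΩ hΩ (fun x _ hx => by rw [hφ0 x hx]; ring)
    refine ContinuousOn.mul ?_ (hφ.continuous.pow 2).continuousOn
    rw [hT2def]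
    exact ((continuousOn_const.mul ((hnormc b hb).continuousOn.mul
      (hu.continuousOn.rpow_const (fun x hx => Or.inl (hupos x hx).ne')))).mul
      hζ.continuousOn).div hη.continuousOn (fun x hx => (hηpos x hx).ne')
  -- conclude
  rw [← MeasureTheory.integral_const_mul]
  calc ∫ x in Ω, Real.sqrt (p * q) *
        (‖x‖ ^ ((a + b) / 2) * v x ^ ((p - 1) / 2) * u x ^ ((q - 1) / 2) * φ x ^ 2)
      ≤ ∫ x in Ω, (1 / 2) * (T1 x * φ x ^ 2 + T2 x * φ x ^ 2) := by
        refine setIntegral_mono_on intL0 ?_ hΩ.measurableSet key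
        exact (intT1.add intT2).const_mul _
    _ = (1 / 2) * ((∫ x in Ω, T1 x * φ x ^ 2) + ∫ x in Ω, T2 x * φ x ^ 2) := by
        rw [MeasureTheory.integral_const_mul, integral_add intT1 intT2]
    _ ≤ ∫ x in Ω, ‖gradient φ x‖ ^ 2 := by linarith
end
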